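/- Let H = ⊕_{n∈ℕ} ℤ with standard basis (e_n) and let S = {e_i − (i+1)e_{i+1} : i ∈ ℕ}. Then there is no countable linearly independent subset p of H with S ⊆ p such that H/⟨p⟩ is ℵ₁-free; that is, S has no lower bound in the poset (P_pb, ≤). -/

import Mathlib

/-- An abelian group is ℵ₁-free if every countable subgroup is free (as a ℤ-module). -/
def Aleph1Free (H : Type*) [AddCommGroup H] : Prop :=
  ∀ K : AddSubgroup H, Countable K → Module.Free ℤ K

/-- The first uncountable ordinal ω₁. -/
noncomputable def omega1 : Ordinal := (Cardinal.aleph 1).ord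

/-- `C` is a club in `o`: a subset of `o` closed under suprema of its bounded
nonempty subsets and unbounded in `o`. -/
def IsClubIn (C : Set Ordinal) (o : Ordinal) : Prop :=
  (∀ α ∈ C, α < o) ∧
  (∀ S : Set Ordinal, S ⊆ C → S.Nonempty → (∃ β < o, ∀ x ∈ S, x ≤ β) → sSup S ∈ C) ∧
  (∀ α < o, ∃ β ∈ C, α < β)

/-- `F` (restricted to ordinals `< ω₁`) is an ℵ₁-filtration of `H`. -/
def IsAleph1Filtration {H : Type*} [AddCommGroup H] (F : Ordinal → AddSubgroup H) : Prop :=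
  (∀ α < omega1, Countable (F α)) ∧
  (∀ α β : Ordinal, α ≤ β → β < omega1 → F α ≤ F β) ∧
  (∀ α < omega1, Order.IsSuccLimit α → ∀ x : H, x ∈ F α ↔ ∃ β < α, x ∈ F β) ∧
  (∀ x : H, ∃ α < omega1, x ∈ F α)

/-- The forcing poset of partial bases. -/
def Ppb (H : Type*) [AddCommGroup H] : Set (Set H) :=
  {p | LinearIndependent ℤ ((↑) : p → H) ∧ p.Countable ∧
    Aleph1Free (H ⧸ AddSubgroup.closure p)}
/-- The standard basis of `H = ⊕_{n ∈ ℕ} ℤ`. -/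
noncomputable def e (i : ℕ) : ℕ →₀ ℤ := Finsupp.single i 1

/-- `s i = e i - (i+1) • e (i+1)`. -/
noncomputable def s (i : ℕ) : ℕ →₀ ℤ := e i - ((i : ℤ) + 1) • e (i + 1)

lemma int_zero (z : ℤ) (h : ∀ n : ℕ, ((n : ℤ) + 1) ∣ z) : z = 0 := by
  by_contra hz
  have h1 : ((z.natAbs : ℤ) + 1) ∣ |z| := (dvd_abs _ _).mpr (h z.natAbs)
  have h2 := Int.le_of_dvd (abs_pos.mpr hz) h1
  rw [Int.abs_eq_natAbs] at h2
  omega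

lemma free_div_zero (M : Type*) [AddCommGroup M] [Module ℤ M] [Module.Free ℤ M] (x : M)
    (h : ∀ n : ℕ, ∃ y : M, x = ((n : ℤ) + 1) • y) : x = 0 := by
  classical
  let b := Module.Free.chooseBasis ℤ M
  have hr : b.repr x = 0 := by
    ext j
    apply int_zero
    intro n
    obtain ⟨y, hy⟩ := h n
    refine ⟨b.repr y j, ?_⟩
    simp [hy]
  have := congrArg b.repr.symm hr
  simpa using this

lemma s_apply (j i : ℕ) : (s j) i =
    if i = j then 1 else (if i = j + 1 then -((j:ℤ)+1) else 0) := by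
  simp [s, e, Finsupp.single_apply]
  split_ifs <;> omega

lemma s_inj : Function.Injective s := by
  intro i j hij
  by_contra hne
  have h1 : (s i) i = 1 := by rw [s_apply]; simp
  rw [hij, s_apply, if_neg hne] at h1
  split_ifs at h1 with h3
  · omega
  · omega

/-- There is no countable linearly independent subset `p` of
`H = ⊕_{n ∈ ℕ} ℤ` with `S ⊆ p` and `H/⟨p⟩` ℵ₁-free; i.e., `S` has no lower bound
in the poset `(P_pb, ≤)`. -/
theorem no_lower_bound_for_S :
    ¬ ∃ p : Set (ℕ →₀ ℤ), p.Countable ∧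
        LinearIndependent ℤ ((↑) : p → (ℕ →₀ ℤ)) ∧
        Set.range s ⊆ p ∧
        Aleph1Free ((ℕ →₀ ℤ) ⧸ AddSubgroup.closure p) := by
  classical
  rintro ⟨p, hpc, hli, hSp, hfree⟩
  set N := AddSubgroup.closure p with hN
  set Q := (ℕ →₀ ℤ) ⧸ N with hQ
  haveI hQc : Countable Q := Quotient.countable
  haveI hQfree : Module.Free ℤ Q := by
    haveI hct : Countable (⊤ : AddSubgroup Q) :=
      Countable.of_equiv Q (AddSubgroup.topEquiv (G := Q)).symm.toEquiv
    have h1 : Module.Free ℤ (⊤ : AddSubgroup Q) := hfree ⊤ hct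
    exact Module.Free.of_equiv (AddSubgroup.topEquiv (G := Q)).toIntLinearEquiv
  set π : (ℕ →₀ ℤ) →+ Q := QuotientAddGroup.mk' N with hπ
  have hπs : ∀ i, π (s i) = 0 := fun i =>
    (QuotientAddGroup.eq_zero_iff _).mpr (AddSubgroup.subset_closure (hSp ⟨i, rfl⟩))
  have key : ∀ i, π (e i) = ((i : ℤ) + 1) • π (e (i + 1)) := by
    intro i
    have h0 := hπs i
    rw [s, map_sub, map_zsmul, sub_eq_zero] at h0
    exact h0
  have fact : ∀ n, π (e 0) = (n.factorial : ℤ) • π (e n) := by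
    intro n
    induction n with
    | zero => simp
    | succ n ih =>
      rw [ih, key n, smul_smul, Nat.factorial_succ]
      push_cast
      ring_nf
  have e0mem : π (e 0) = 0 := by
    apply free_div_zero Q
    intro n
    refine ⟨(n.factorial : ℤ) • π (e (n + 1)), ?_⟩
    rw [fact (n + 1), smul_smul, Nat.factorial_succ]
    push_cast
    ring_nf
  haveI hnzd : NoZeroSMulDivisors ℤ Q :=
    (Module.Free.chooseBasis ℤ Q).repr.injective.noZeroSMulDivisors _ (by simp) (by simp)
  have allmem : ∀ i, π (e i) = 0 := by
    intro i
    induction i with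
    | zero => exact e0mem
    | succ i ih =>
      have h1 : ((i : ℤ) + 1) • π (e (i + 1)) = 0 := by rw [← key i, ih]
      have h2 : ((i : ℤ) + 1) ≠ 0 := by positivity
      exact (smul_eq_zero_iff_right h2).mp h1
  have Ntop : ∀ x : ℕ →₀ ℤ, x ∈ N := by
    intro x
    induction x using Finsupp.induction with
    | zero => exact N.zero_mem
    | single_add a b f _ _ ih =>
      refine N.add_mem ?_ ih
      have hea : e a ∈ N := (QuotientAddGroup.eq_zero_iff _).mp (allmem a)
      have hsingle : Finsupp.single a b = b • e a := by
        rw [e, Finsupp.smul_single]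
        norm_num
      rw [hsingle]
      exact N.zsmul_mem hea b
  have hspan : ⊤ ≤ Submodule.span ℤ (Set.range ((↑) : p → (ℕ →₀ ℤ))) := by
    rw [Subtype.range_coe]
    intro x _
    have hx : x ∈ N := Ntop x
    have hle : N ≤ (Submodule.span ℤ p).toAddSubgroup :=
      (AddSubgroup.closure_le _).mpr Submodule.subset_span
    exact hle hx
  set B : Module.Basis p ℤ (ℕ →₀ ℤ) := Module.Basis.mk hli hspan with hB
  have tele : ∀ n, e 0 =
      (∑ i ∈ Finset.range n, (i.factorial : ℤ) • s i) + (n.factorial : ℤ) • e n := by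
    intro n
    induction n with
    | zero => simp
    | succ n ih =>
      rw [Finset.sum_range_succ, ih]
      have hsn : (e n : ℕ →₀ ℤ) = s n + ((n : ℤ) + 1) • e (n + 1) := by
        rw [s]; abel
      rw [hsn, smul_add, smul_smul, Nat.factorial_succ]
      push_cast
      ring_nf
      abel
  set j : ℕ → p := fun m => ⟨s m, hSp ⟨m, rfl⟩⟩ with hj
  have jinj : Function.Injective j := by
    intro a b hab
    exact s_inj (congrArg Subtype.val hab)
  have repr_s : ∀ i m : ℕ, B.repr (s i) (j m) = if i = m then 1 else 0 := by
    intro i m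
    have h1 : s i = B (j i) := by rw [hB, Module.Basis.mk_apply]
    rw [h1, Module.Basis.repr_self, Finsupp.single_apply]
    by_cases h : i = m
    · simp [h]
    · rw [if_neg h, if_neg (fun hc => h (jinj hc))]
  have claim : ∀ m n : ℕ, m < n →
      B.repr (e 0) (j m) = (m.factorial : ℤ)
        + (n.factorial : ℤ) * B.repr (e n) (j m) := by
    intro m n hmn
    have h1 := congrArg (fun x : ℕ →₀ ℤ => B.repr x (j m)) (tele n)
    simp only [map_add, map_sum, map_smul, Finsupp.coe_add, Finsupp.coe_smul,
      Finsupp.coe_finset_sum, Finset.sum_apply, Pi.add_apply, Pi.smul_apply,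
      smul_eq_mul] at h1
    rw [Finset.sum_congr rfl (fun i _ => by rw [repr_s i m])] at h1
    rw [h1]
    congr 1
    simp only [mul_ite, mul_one, mul_zero]
    rw [Finset.sum_ite_eq' (Finset.range n) m (fun i => (i.factorial : ℤ))]
    simp [Finset.mem_range.mpr hmn]
  have coord : ∀ m : ℕ, B.repr (e 0) (j m) = (m.factorial : ℤ) := by
    intro m
    have hdvd : ∀ k : ℕ, ((k : ℤ) + 1) ∣ (B.repr (e 0) (j m) - (m.factorial : ℤ)) := by
      intro k
      have hn := claim m (m + k + 2) (by omega)
      have h2 : B.repr (e 0) (j m) - (m.factorial : ℤ)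
          = ((m + k + 2).factorial : ℤ) * B.repr (e (m + k + 2)) (j m) := by
        rw [hn]; ring
      rw [h2]
      refine dvd_mul_of_dvd_left ?_ _
      have : (k + 1) ∣ (m + k + 2).factorial :=
        Nat.dvd_factorial (Nat.succ_pos k) (by omega)
      exact_mod_cast Int.natCast_dvd_natCast.mpr this
    have h0 := int_zero _ hdvd
    linarith
  have hsupp : ∀ m : ℕ, j m ∈ (B.repr (e 0)).support := by
    intro m
    rw [Finsupp.mem_support_iff, coord m]
    exact_mod_cast m.factorial_ne_zero
  have hfin : (Set.range j).Finite :=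
    Set.Finite.subset (B.repr (e 0)).support.finite_toSet
      (by rintro _ ⟨m, rfl⟩; exact hsupp m)
  exact (Set.infinite_range_of_injective jinj) hfin
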